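/- Let m, l, n be natural numbers with m ≥ 2 and l ≥ m, let M : ℝⁿ → Matrix (Fin m) (Fin l) ℝ be a matrix-valued map each of whose entries is differentiable at a point x₀ ∈ ℝⁿ, and suppose rank (M x₀) ≤ m − 2. Then for every injective map σ : Fin m → Fin l, the real-valued function x ↦ det (fun i j => M x i (σ j)) (the m×m minor of M x with columns selected by σ) has vanishing Fréchet derivative at x₀. (Consequently, every point of the shakiness variety, defined by the vanishing of all m×m minors of the rigidity matrix, at which the rigidity matrix has rank less than m − 1 — i.e. at which more than one independent non-trivial infinitesimal flex exists — is a singular point of that variety.) -/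

import Mathlib

open Matrix Finset

/-- The determinant, as a continuous multilinear map in the rows. -/
noncomputable def detCML (m : ℕ) :
    ContinuousMultilinearMap ℝ (fun _ : Fin m => (Fin m → ℝ)) ℝ :=
  MultilinearMap.mkContinuous
    (Matrix.detRowAlternating (R := ℝ) (n := Fin m)).toMultilinearMap
    (m.factorial) (fun v => by
      have h1 : (Matrix.detRowAlternating (R := ℝ) (n := Fin m)).toMultilinearMap v
          = Matrix.det (Matrix.of v) := rfl
      rw [h1, Matrix.det_apply]
      calc ‖∑ σ : Equiv.Perm (Fin m), Equiv.Perm.sign σ • ∏ i, Matrix.of v (σ i) i‖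
          ≤ ∑ σ : Equiv.Perm (Fin m), ‖Equiv.Perm.sign σ • ∏ i, Matrix.of v (σ i) i‖ :=
            norm_sum_le _ _
        _ ≤ ∑ _σ : Equiv.Perm (Fin m), ∏ i, ‖v i‖ := by
            refine Finset.sum_le_sum fun σ _ => ?_
            have : ‖Equiv.Perm.sign σ • ∏ i, Matrix.of v (σ i) i‖
                = ‖∏ i, v (σ i) i‖ := by
              rcases Int.units_eq_one_or (Equiv.Perm.sign σ) with h | h <;>
                simp [h, Matrix.of_apply]
            rw [this]
            calc ‖∏ i, v (σ i) i‖ = ∏ i, ‖v (σ i) i‖ := by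
                  rw [norm_prod]
              _ ≤ ∏ i, ‖v (σ i)‖ :=
                  Finset.prod_le_prod (fun i _ => norm_nonneg _)
                    (fun i _ => norm_le_pi_norm (v (σ i)) i)
              _ = ∏ i, ‖v i‖ := Equiv.prod_comp σ fun j => ‖v j‖
        _ = (m.factorial : ℝ) * ∏ i, ‖v i‖ := by
            rw [Finset.sum_const, Finset.card_univ, Fintype.card_perm, Fintype.card_fin,
              nsmul_eq_mul])

theorem minor_fderiv_eq_zero_of_rank_le
    (m l n : ℕ) (hm : 2 ≤ m) (hl : m ≤ l)
    (M : (Fin n → ℝ) → Matrix (Fin m) (Fin l) ℝ) (x₀ : Fin n → ℝ)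
    (hdiff : ∀ i j, DifferentiableAt ℝ (fun x => M x i j) x₀)
    (hrank : Matrix.rank (M x₀) ≤ m - 2) :
    ∀ σ : Fin m → Fin l, Function.Injective σ →
      fderiv ℝ (fun x => Matrix.det (Matrix.of fun i j => M x i (σ j))) x₀ = 0 := by
  intro σ hσ
  -- the minor as a matrix-valued map
  set N : (Fin n → ℝ) → (Fin m → (Fin m → ℝ)) := fun x i j => M x i (σ j) with hN
  -- N is differentiable at x₀
  have hNdiff : DifferentiableAt ℝ N x₀ := by
    rw [differentiableAt_pi]
    intro i
    rw [differentiableAt_pi]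
    intro j
    exact hdiff i (σ j)
  obtain ⟨N', hN'⟩ := hNdiff
  -- rank of the minor at x₀ is at most m - 2
  have hrankN : Matrix.rank (Matrix.of (N x₀)) ≤ m - 2 := by
    refine le_trans ?_ hrank
    rw [Matrix.rank_eq_finrank_span_cols, Matrix.rank_eq_finrank_span_cols]
    apply Submodule.finrank_mono
    apply Submodule.span_mono
    rintro _ ⟨j, rfl⟩
    exact ⟨σ j, rfl⟩
  -- the derivative of det at N x₀ vanishes
  have hld : (detCML m).linearDeriv (N x₀) = 0 := by
    ext y
    rw [ContinuousMultilinearMap.linearDeriv_apply]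
    simp only [ContinuousLinearMap.zero_apply]
    refine Finset.sum_eq_zero fun i _ => ?_
    have hdep : ¬ LinearIndependent ℝ (Function.update (N x₀) i (y i)) := by
      intro hindep
      have hsub : LinearIndependent ℝ
          (fun j : {j : Fin m // j ≠ i} => Function.update (N x₀) i (y i) j.val) :=
        hindep.comp _ Subtype.val_injective
      have heq : (fun j : {j : Fin m // j ≠ i} => Function.update (N x₀) i (y i) j.val)
          = fun j : {j : Fin m // j ≠ i} => N x₀ j.val := by
        funext j
        exact Function.update_of_ne j.2 _ _
      rw [heq] at hsub
      have hcard : Fintype.card {j : Fin m // j ≠ i} = m - 1 := by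
        simp [Fintype.card_subtype_compl, Fintype.card_fin]
      have hfr := finrank_span_eq_card hsub
      rw [hcard] at hfr
      -- span of these rows is contained in span of all rows of N x₀
      have hle : Submodule.span ℝ (Set.range fun j : {j : Fin m // j ≠ i} => N x₀ j.val)
          ≤ Submodule.span ℝ (Set.range (N x₀)) := by
        apply Submodule.span_mono
        rintro _ ⟨j, rfl⟩
        exact ⟨j.val, rfl⟩
      have h1 : m - 1 ≤ Module.finrank ℝ (Submodule.span ℝ (Set.range (N x₀))) := by
        rw [← hfr]; exact Submodule.finrank_mono hle
      have h2 : Matrix.rank ((Matrix.of (N x₀))ᵀ) ≤ m - 2 := by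
        rw [Matrix.rank_transpose]; exact hrankN
      rw [Matrix.rank_eq_finrank_span_cols] at h2
      have h3 : Set.range ((Matrix.of (N x₀) : Matrix (Fin m) (Fin m) ℝ)ᵀ.col)
          = Set.range (N x₀) := rfl
      rw [h3] at h2
      omega
    exact (Matrix.detRowAlternating (R := ℝ) (n := Fin m)).map_linearDependent _ hdep
  -- composition
  have hcomp : HasFDerivAt (fun x => Matrix.det (Matrix.of fun i j => M x i (σ j)))
      (((detCML m).linearDeriv (N x₀)).comp N') x₀ := by
    have hdet := (detCML m).hasFDerivAt (x := N x₀)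
    exact hdet.comp x₀ hN'
  rw [hld] at hcomp
  rw [hcomp.fderiv, ContinuousLinearMap.zero_comp]
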